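/- Let y = A s with s ≠ 0 and ‖e‖₂ = ε_y ‖y‖₂ for some ε_y ≥ 0. If A satisfies the RIP of order K, s_K is the best K-term approximation of s, r_K = ‖s−s_K‖₂/‖s‖₂ and s_K' = ‖s−s_K‖₁/(√K‖s‖₂), then ‖e‖₂ ≤ ε_y · ‖A‖₂^{(K)} · ‖s‖₂ · (1 + r_K + s_K'), where ‖A‖₂^{(K)} is the maximal spectral norm over K-column submatrices. -/

import Mathlib

open Matrix Finset

/-- The ℓ₂ norm of a finite real vector. -/
noncomputable def l2 {n : ℕ} (v : Fin n → ℝ) : ℝ := Real.sqrt (∑ i, (v i) ^ 2)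

/-- The ℓ₁ norm of a finite real vector. -/
noncomputable def l1 {n : ℕ} (v : Fin n → ℝ) : ℝ := ∑ i, |v i|

/-- A vector is `K`-sparse if it has at most `K` nonzero entries. -/
def IsSparse {n : ℕ} (K : ℕ) (v : Fin n → ℝ) : Prop :=
  ∃ S : Finset (Fin n), S.card ≤ K ∧ ∀ i ∉ S, v i = 0

/-- `A` satisfies the RIP of order `K` with constant `δ`. -/
def SatisfiesRIP {m n : ℕ} (A : Matrix (Fin m) (Fin n) ℝ) (K : ℕ) (δ : ℝ) : Prop :=
  ∀ v : Fin n → ℝ, IsSparse K v →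
    (1 - δ) * (l2 v) ^ 2 ≤ (l2 (A.mulVec v)) ^ 2 ∧
      (l2 (A.mulVec v)) ^ 2 ≤ (1 + δ) * (l2 v) ^ 2

/-- Spectral norm (ℓ₂ operator norm) of a matrix. -/
noncomputable def specNorm {m n : ℕ} (A : Matrix (Fin m) (Fin n) ℝ) : ℝ :=
  sSup {c | ∃ v : Fin n → ℝ, l2 v ≤ 1 ∧ c = l2 (A.mulVec v)}

/-- The matrix with the columns of `A` indexed by `S` kept and all other columns zeroed,
representing the column-submatrix `A_S`. -/
def colRestrict {m n : ℕ} (A : Matrix (Fin m) (Fin n) ℝ) (S : Finset (Fin n)) :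
    Matrix (Fin m) (Fin n) ℝ := fun i j => if j ∈ S then A i j else 0

/-- `‖A‖₂^{(K)}`: the largest spectral norm over all `K`-column submatrices of `A`. -/
noncomputable def subNorm {m n : ℕ} (A : Matrix (Fin m) (Fin n) ℝ) (K : ℕ) : ℝ :=
  sSup {c | ∃ S : Finset (Fin n), S.card = K ∧ c = specNorm (colRestrict A S)}

/-- The pseudo-inverse `(BᵀB)⁻¹Bᵀ` of a full-column-rank matrix `B`. -/
noncomputable def pinv {m k : ℕ} (B : Matrix (Fin m) (Fin k) ℝ) : Matrix (Fin k) (Fin m) ℝ :=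
  (Bᵀ * B)⁻¹ * Bᵀ

/-- `sK` is a best `K`-term (ℓ₂) approximation of `s`. -/
def IsBestApprox {n : ℕ} (K : ℕ) (s sK : Fin n → ℝ) : Prop :=
  IsSparse K sK ∧ ∀ t : Fin n → ℝ, IsSparse K t → l2 (s - sK) ≤ l2 (s - t)

/-- Embed a vector indexed by `Fin k` into `Fin n` along an injection `f` (zero elsewhere). -/
noncomputable def embedVec {k n : ℕ} (f : Fin k → Fin n) (w : Fin k → ℝ) : Fin n → ℝ :=
  fun j => ∑ i, if f i = j then w i else 0

section AuxL2
variable {m n : ℕ}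

lemma l2_nonneg (v : Fin n → ℝ) : 0 ≤ l2 v := Real.sqrt_nonneg _

lemma l2_sq (v : Fin n → ℝ) : l2 v ^ 2 = ∑ i, v i ^ 2 :=
  Real.sq_sqrt (Finset.sum_nonneg fun i _ => sq_nonneg _)

lemma l2_zero : l2 (0 : Fin n → ℝ) = 0 := by simp [l2]

lemma l2_eq_norm (v : Fin n → ℝ) :
    l2 v = ‖(WithLp.equiv 2 (Fin n → ℝ)).symm v‖ := by
  rw [EuclideanSpace.norm_eq]
  simp [l2, Real.norm_eq_abs, sq_abs]

lemma l2_add_le (u v : Fin n → ℝ) : l2 (u + v) ≤ l2 u + l2 v := by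
  rw [l2_eq_norm, l2_eq_norm, l2_eq_norm]
  exact norm_add_le _ _

lemma l2_smul (c : ℝ) (v : Fin n → ℝ) : l2 (c • v) = |c| * l2 v := by
  rw [l2_eq_norm, l2_eq_norm]
  rw [show (WithLp.equiv 2 (Fin n → ℝ)).symm (c • v)
      = c • (WithLp.equiv 2 (Fin n → ℝ)).symm v from rfl]
  rw [norm_smul, Real.norm_eq_abs]

lemma l2_mono {u v : Fin n → ℝ} (h : ∀ i, u i ^ 2 ≤ v i ^ 2) : l2 u ≤ l2 v :=
  Real.sqrt_le_sqrt (Finset.sum_le_sum fun i _ => h i)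

lemma l2_pos {v : Fin n → ℝ} (hv : v ≠ 0) : 0 < l2 v := by
  obtain ⟨i, hi⟩ : ∃ i, v i ≠ 0 := by
    by_contra hc; push_neg at hc; exact hv (funext hc)
  apply Real.sqrt_pos.mpr
  have : (0:ℝ) < v i ^ 2 := by positivity
  calc (0:ℝ) < v i ^ 2 := this
    _ ≤ ∑ j, v j ^ 2 :=
      Finset.single_le_sum (f := fun j => v j ^ 2) (fun j _ => sq_nonneg _) (Finset.mem_univ i)

lemma l1_nonneg (v : Fin n → ℝ) : 0 ≤ l1 v :=
  Finset.sum_nonneg fun i _ => abs_nonneg _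

end AuxL2

section AuxSpec
variable {m n : ℕ}

lemma specSet_bddAbove (B : Matrix (Fin m) (Fin n) ℝ) :
    BddAbove {c | ∃ v : Fin n → ℝ, l2 v ≤ 1 ∧ c = l2 (B.mulVec v)} := by
  refine ⟨Real.sqrt (∑ i, ∑ j, B i j ^ 2), ?_⟩
  rintro c ⟨v, hv, rfl⟩
  have hvn : 0 ≤ l2 v := l2_nonneg v
  have h1 : l2 (B.mulVec v) ^ 2 ≤ (∑ i, ∑ j, B i j ^ 2) * (l2 v ^ 2) := by
    rw [l2_sq, l2_sq, Finset.sum_mul]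
    refine Finset.sum_le_sum fun i _ => ?_
    have : B.mulVec v i = ∑ j, B i j * v j := by
      simp [Matrix.mulVec, dotProduct]
    rw [this]
    exact Finset.sum_mul_sq_le_sq_mul_sq _ _ _
  have h2 : l2 (B.mulVec v) ^ 2 ≤ ∑ i, ∑ j, B i j ^ 2 := by
    have hB : 0 ≤ ∑ i, ∑ j, B i j ^ 2 :=
      Finset.sum_nonneg fun i _ => Finset.sum_nonneg fun j _ => sq_nonneg _
    calc l2 (B.mulVec v) ^ 2 ≤ (∑ i, ∑ j, B i j ^ 2) * (l2 v ^ 2) := h1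
      _ ≤ (∑ i, ∑ j, B i j ^ 2) * 1 := by
          apply mul_le_mul_of_nonneg_left _ hB
          calc l2 v ^ 2 ≤ 1 ^ 2 := pow_le_pow_left₀ hvn hv 2
            _ = 1 := one_pow 2
      _ = ∑ i, ∑ j, B i j ^ 2 := mul_one _
  calc l2 (B.mulVec v) = Real.sqrt (l2 (B.mulVec v) ^ 2) :=
        (Real.sqrt_sq (l2_nonneg _)).symm
    _ ≤ Real.sqrt (∑ i, ∑ j, B i j ^ 2) := Real.sqrt_le_sqrt h2

lemma specNorm_nonneg (B : Matrix (Fin m) (Fin n) ℝ) : 0 ≤ specNorm B := by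
  apply le_csSup (specSet_bddAbove B)
  exact ⟨0, by simp [l2_zero], by simp [Matrix.mulVec_zero, l2_zero]⟩

lemma le_specNorm (B : Matrix (Fin m) (Fin n) ℝ) (v : Fin n → ℝ) :
    l2 (B.mulVec v) ≤ specNorm B * l2 v := by
  by_cases hv : v = 0
  · subst hv; simp [Matrix.mulVec_zero, l2_zero]
  · have hpos : 0 < l2 v := l2_pos hv
    set w : Fin n → ℝ := (l2 v)⁻¹ • v with hw
    have hl2w : l2 w = 1 := by
      rw [hw, l2_smul, abs_of_pos (inv_pos.2 hpos)]
      field_simp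
    have hmem : l2 (B.mulVec w) ∈
        {c | ∃ u : Fin n → ℝ, l2 u ≤ 1 ∧ c = l2 (B.mulVec u)} := ⟨w, hl2w.le, rfl⟩
    have hle := le_csSup (specSet_bddAbove B) hmem
    have heq : l2 (B.mulVec w) = (l2 v)⁻¹ * l2 (B.mulVec v) := by
      rw [hw, Matrix.mulVec_smul, l2_smul, abs_of_pos (inv_pos.2 hpos)]
    rw [heq] at hle
    calc l2 (B.mulVec v) = l2 v * ((l2 v)⁻¹ * l2 (B.mulVec v)) := by field_simp
      _ ≤ l2 v * specNorm B := mul_le_mul_of_nonneg_left hle hpos.le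
      _ = specNorm B * l2 v := mul_comm _ _

lemma le_subNorm (A : Matrix (Fin m) (Fin n) ℝ) (K : ℕ) (S : Finset (Fin n))
    (hS : S.card = K) : specNorm (colRestrict A S) ≤ subNorm A K := by
  have hbdd : BddAbove {c | ∃ S : Finset (Fin n), S.card = K ∧ c = specNorm (colRestrict A S)} := by
    apply Set.Finite.bddAbove
    have : {c | ∃ S : Finset (Fin n), S.card = K ∧ c = specNorm (colRestrict A S)}
        ⊆ (fun S => specNorm (colRestrict A S)) '' Set.univ := by
      rintro c ⟨S, _, rfl⟩; exact ⟨S, Set.mem_univ _, rfl⟩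
    exact (Set.finite_univ.image _).subset this
  exact le_csSup hbdd ⟨S, hS, rfl⟩

lemma subNorm_nonneg (A : Matrix (Fin m) (Fin n) ℝ) (K : ℕ) (hKn : K ≤ n) :
    0 ≤ subNorm A K := by
  obtain ⟨S, -, hS⟩ := Finset.exists_subset_card_eq
    (show K ≤ (Finset.univ : Finset (Fin n)).card by simpa using hKn)
  exact le_trans (specNorm_nonneg _) (le_subNorm A K S hS)

end AuxSpec

section AuxBlocks
variable {m n : ℕ}

/-- Restriction of a vector to a finset of coordinates. -/
noncomputable def rst (T : Finset (Fin n)) (v : Fin n → ℝ) : Fin n → ℝ :=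
  fun j => if j ∈ T then v j else 0

lemma mulVec_rst (A : Matrix (Fin m) (Fin n) ℝ) (T : Finset (Fin n)) (v : Fin n → ℝ) :
    A.mulVec (rst T v) = (colRestrict A T).mulVec (rst T v) := by
  funext i
  simp only [Matrix.mulVec, dotProduct, colRestrict, rst]
  refine Finset.sum_congr rfl fun j _ => ?_
  by_cases hj : j ∈ T <;> simp [hj]

lemma block_bound (A : Matrix (Fin m) (Fin n) ℝ) (K : ℕ) (T : Finset (Fin n))
    (hT : T.card = K) (v : Fin n → ℝ) :
    l2 (A.mulVec (rst T v)) ≤ subNorm A K * l2 (rst T v) := by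
  rw [mulVec_rst]
  calc l2 ((colRestrict A T).mulVec (rst T v))
      ≤ specNorm (colRestrict A T) * l2 (rst T v) := le_specNorm _ _
    _ ≤ subNorm A K * l2 (rst T v) :=
        mul_le_mul_of_nonneg_right (le_subNorm A K T hT) (l2_nonneg _)

lemma sparse_bound (A : Matrix (Fin m) (Fin n) ℝ) (K : ℕ) (hKn : K ≤ n)
    (v : Fin n → ℝ) (hv : IsSparse K v) :
    l2 (A.mulVec v) ≤ subNorm A K * l2 v := by
  obtain ⟨S, hScard, hSsupp⟩ := hv
  obtain ⟨T, hST, -, hTcard⟩ := Finset.exists_subsuperset_card_eq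
    (Finset.subset_univ S) hScard (by simpa using hKn)
  have hv : v = rst T v := by
    funext j
    by_cases hj : j ∈ T
    · simp [rst, hj]
    · simp [rst, hj, hSsupp j (fun hjS => hj (hST hjS))]
  rw [hv]
  exact block_bound A K T hTcard v

/-- There is a set of `K` coordinates carrying the largest absolute values. -/
lemma exists_top (v : Fin n → ℝ) :
    ∀ K, K ≤ n → ∃ T : Finset (Fin n), T.card = K ∧ ∀ i ∈ T, ∀ j ∉ T, |v j| ≤ |v i| := by
  intro K
  induction K with
  | zero => exact fun _ => ⟨∅, rfl, by simp⟩
  | succ k ih =>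
    intro hk
    obtain ⟨T, hTc, hTmax⟩ := ih (Nat.le_of_succ_le hk)
    have hne : Tᶜ.Nonempty := by
      rw [← Finset.card_pos, Finset.card_compl, hTc]
      simpa using Nat.lt_of_succ_le hk
    obtain ⟨j0, hj0, hmax⟩ := Finset.exists_max_image Tᶜ (fun j => |v j|) hne
    have hj0T : j0 ∉ T := Finset.mem_compl.mp hj0
    refine ⟨insert j0 T, ?_, ?_⟩
    · rw [Finset.card_insert_of_notMem hj0T, hTc]
    · intro i hi l hl
      have hlT : l ∉ T := fun hlT => hl (Finset.mem_insert_of_mem hlT)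
      rcases Finset.mem_insert.mp hi with rfl | hiT
      · exact hmax l (Finset.mem_compl.mpr hlT)
      · exact hTmax i hiT l hlT

lemma l1_split (T : Finset (Fin n)) (v : Fin n → ℝ) :
    l1 (rst T v) + l1 (fun j => if j ∈ T then 0 else v j) = l1 v := by
  simp only [l1, rst, ← Finset.sum_add_distrib]
  refine Finset.sum_congr rfl fun j _ => ?_
  by_cases hj : j ∈ T <;> simp [hj]

end AuxBlocks

section MainInd
variable {m n : ℕ}

lemma l1_zero : l1 (0 : Fin n → ℝ) = 0 := by simp [l1]

lemma l1_rst (T : Finset (Fin n)) (v : Fin n → ℝ) :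
    l1 (rst T v) = ∑ i ∈ T, |v i| := by
  simp only [l1, rst, apply_ite abs, abs_zero]
  rw [Finset.sum_ite_mem, Finset.univ_inter]

open Classical in
lemma main_ind (A : Matrix (Fin m) (Fin n) ℝ) (K : ℕ) (hK : 0 < K) (hKn : K ≤ n) :
    ∀ N : ℕ, ∀ h : Fin n → ℝ, ∀ t : ℝ,
      (Finset.univ.filter (fun j => h j ≠ 0)).card ≤ N →
      (∀ j, |h j| ≤ t) →
      l2 (A.mulVec h) ≤ subNorm A K * (Real.sqrt K * t + l1 h / Real.sqrt K) := by
  have hn0 : 0 < n := lt_of_lt_of_le hK hKn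
  have hC : 0 ≤ subNorm A K := subNorm_nonneg A K hKn
  have hsqK : 0 < Real.sqrt K := Real.sqrt_pos.mpr (by exact_mod_cast hK)
  intro N
  induction N with
  | zero =>
    intro h t hcard hbnd
    have ht0 : 0 ≤ t := le_trans (abs_nonneg _) (hbnd ⟨0, hn0⟩)
    have hh : h = 0 := by
      funext j
      by_contra hj
      have hmem : j ∈ Finset.univ.filter (fun j => h j ≠ 0) :=
        Finset.mem_filter.mpr ⟨Finset.mem_univ _, hj⟩
      rw [Finset.card_eq_zero.mp (Nat.le_zero.mp hcard)] at hmem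
      exact absurd hmem (Finset.notMem_empty j)
    rw [hh]
    simp only [Matrix.mulVec_zero, l2_zero, l1_zero, zero_div, add_zero]
    exact mul_nonneg hC (mul_nonneg (Real.sqrt_nonneg _) ht0)
  | succ N ih =>
    intro h t hcard hbnd
    have ht0 : 0 ≤ t := le_trans (abs_nonneg _) (hbnd ⟨0, hn0⟩)
    obtain ⟨T, hTcard, hTtop⟩ := exists_top h K hKn
    set h1 : Fin n → ℝ := rst T h with hh1
    set h2 : Fin n → ℝ := fun j => if j ∈ T then 0 else h j with hh2
    have hsplit : h = h1 + h2 := by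
      funext j; by_cases hj : j ∈ T <;> simp [hh1, hh2, rst, hj]
    have btri : l2 (A.mulVec h) ≤ l2 (A.mulVec h1) + l2 (A.mulVec h2) := by
      calc l2 (A.mulVec h) = l2 (A.mulVec h1 + A.mulVec h2) := by
            rw [← Matrix.mulVec_add, ← hsplit]
        _ ≤ l2 (A.mulVec h1) + l2 (A.mulVec h2) := l2_add_le _ _
    have b1 : l2 (A.mulVec h1) ≤ subNorm A K * l2 h1 := block_bound A K T hTcard h
    have bl2h1 : l2 h1 ≤ Real.sqrt K * t := by
      have hsum : ∑ j, (h1 j) ^ 2 ≤ (K : ℝ) * t ^ 2 := by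
        have : ∑ j, (h1 j) ^ 2 = ∑ j ∈ T, h j ^ 2 := by
          calc ∑ j, (h1 j) ^ 2 = ∑ j, (if j ∈ T then h j ^ 2 else 0) := by
                refine Finset.sum_congr rfl fun j _ => ?_
                by_cases hj : j ∈ T <;> simp [hh1, rst, hj]
            _ = ∑ j ∈ T, h j ^ 2 := by rw [Finset.sum_ite_mem, Finset.univ_inter]
        rw [this]
        calc ∑ j ∈ T, h j ^ 2 ≤ ∑ j ∈ T, t ^ 2 := by
              refine Finset.sum_le_sum fun j _ => ?_
              rw [← sq_abs]
              exact pow_le_pow_left₀ (abs_nonneg _) (hbnd j) 2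
          _ = (K : ℝ) * t ^ 2 := by
              rw [Finset.sum_const, hTcard, nsmul_eq_mul]
      calc l2 h1 ≤ Real.sqrt ((K : ℝ) * t ^ 2) := Real.sqrt_le_sqrt hsum
        _ = Real.sqrt K * t := by
            rw [Real.sqrt_mul (by positivity), Real.sqrt_sq ht0]
    have hTne : T.Nonempty := Finset.card_pos.mp (by rw [hTcard]; exact hK)
    obtain ⟨i0, hi0, hmin⟩ := Finset.exists_min_image T (fun i => |h i|) hTne
    set t' := |h i0| with ht'
    have hb2 : ∀ j, |h2 j| ≤ t' := by
      intro j
      by_cases hj : j ∈ T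
      · simp only [hh2, if_pos hj, abs_zero]; exact abs_nonneg _
      · simp only [hh2, if_neg hj]; exact hTtop i0 hi0 j hj
    have hKt' : (K : ℝ) * t' ≤ l1 h1 := by
      rw [hh1, l1_rst]
      calc (K : ℝ) * t' = ∑ _i ∈ T, t' := by rw [Finset.sum_const, hTcard, nsmul_eq_mul]
        _ ≤ ∑ i ∈ T, |h i| := Finset.sum_le_sum fun i hi => hmin i hi
    have hsqt' : Real.sqrt K * t' ≤ l1 h1 / Real.sqrt K := by
      rw [le_div_iff₀ hsqK]
      have hss : Real.sqrt K * Real.sqrt K = (K : ℝ) :=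
        Real.mul_self_sqrt (by positivity)
      calc Real.sqrt K * t' * Real.sqrt K = Real.sqrt K * Real.sqrt K * t' := by ring
        _ = (K : ℝ) * t' := by rw [hss]
        _ ≤ l1 h1 := hKt'
    by_cases hcase : ∀ j, j ∉ T → h j = 0
    · have h20 : h2 = 0 := by
        funext j; by_cases hj : j ∈ T <;> simp [hh2, hj, hcase]
      have : l2 (A.mulVec h2) = 0 := by rw [h20, Matrix.mulVec_zero, l2_zero]
      calc l2 (A.mulVec h) ≤ l2 (A.mulVec h1) + l2 (A.mulVec h2) := btri
        _ = l2 (A.mulVec h1) := by rw [this, add_zero]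
        _ ≤ subNorm A K * l2 h1 := b1
        _ ≤ subNorm A K * (Real.sqrt K * t) := mul_le_mul_of_nonneg_left bl2h1 hC
        _ ≤ subNorm A K * (Real.sqrt K * t + l1 h / Real.sqrt K) := by
            apply mul_le_mul_of_nonneg_left _ hC
            exact le_add_of_nonneg_right (div_nonneg (l1_nonneg h) hsqK.le)
    · push_neg at hcase
      obtain ⟨j1, hj1T, hj1⟩ := hcase
      have hTsub : T ⊆ Finset.univ.filter (fun j => h j ≠ 0) := by
        intro i hi
        refine Finset.mem_filter.mpr ⟨Finset.mem_univ _, ?_⟩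
        have := hTtop i hi j1 hj1T
        intro hi0'
        rw [hi0', abs_zero] at this
        exact hj1 (abs_eq_zero.mp (le_antisymm this (abs_nonneg _)))
      have hsupp2 : Finset.univ.filter (fun j => h2 j ≠ 0)
          ⊆ (Finset.univ.filter (fun j => h j ≠ 0)) \ T := by
        intro j hj
        have hj2 : h2 j ≠ 0 := (Finset.mem_filter.mp hj).2
        have hjT : j ∉ T := fun hjT => hj2 (by simp [hh2, hjT])
        refine Finset.mem_sdiff.mpr ⟨Finset.mem_filter.mpr ⟨Finset.mem_univ _, ?_⟩, hjT⟩
        simpa [hh2, hjT] using hj2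
      have hcard2 : (Finset.univ.filter (fun j => h2 j ≠ 0)).card ≤ N := by
        have h1le := Finset.card_le_card hsupp2
        rw [Finset.card_sdiff_of_subset hTsub, hTcard] at h1le
        omega
      have ih2 := ih h2 t' hcard2 hb2
      calc l2 (A.mulVec h) ≤ l2 (A.mulVec h1) + l2 (A.mulVec h2) := btri
        _ ≤ subNorm A K * l2 h1
            + subNorm A K * (Real.sqrt K * t' + l1 h2 / Real.sqrt K) := add_le_add b1 ih2
        _ ≤ subNorm A K * (Real.sqrt K * t)
            + subNorm A K * (l1 h1 / Real.sqrt K + l1 h2 / Real.sqrt K) := by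
            refine add_le_add (mul_le_mul_of_nonneg_left bl2h1 hC)
              (mul_le_mul_of_nonneg_left (add_le_add_left hsqt' _) hC)
        _ = subNorm A K * (Real.sqrt K * t + l1 h / Real.sqrt K) := by
            rw [← l1_split T h, ← hh1, ← hh2]; ring

open Classical in
lemma main_bound (A : Matrix (Fin m) (Fin n) ℝ) (K : ℕ) (hK : 0 < K) (hKn : K ≤ n)
    (h : Fin n → ℝ) :
    l2 (A.mulVec h) ≤ subNorm A K * (l2 h + l1 h / Real.sqrt K) := by
  have hC : 0 ≤ subNorm A K := subNorm_nonneg A K hKn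
  have hsqK : 0 < Real.sqrt K := Real.sqrt_pos.mpr (by exact_mod_cast hK)
  obtain ⟨T, hTcard, hTtop⟩ := exists_top h K hKn
  set h1 : Fin n → ℝ := rst T h with hh1
  set h2 : Fin n → ℝ := fun j => if j ∈ T then 0 else h j with hh2
  have hsplit : h = h1 + h2 := by
    funext j; by_cases hj : j ∈ T <;> simp [hh1, hh2, rst, hj]
  have btri : l2 (A.mulVec h) ≤ l2 (A.mulVec h1) + l2 (A.mulVec h2) := by
    calc l2 (A.mulVec h) = l2 (A.mulVec h1 + A.mulVec h2) := by
          rw [← Matrix.mulVec_add, ← hsplit]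
      _ ≤ l2 (A.mulVec h1) + l2 (A.mulVec h2) := l2_add_le _ _
  have b1 : l2 (A.mulVec h1) ≤ subNorm A K * l2 h1 := block_bound A K T hTcard h
  have bl2h1 : l2 h1 ≤ l2 h := by
    apply l2_mono
    intro j
    by_cases hj : j ∈ T <;> simp [hh1, rst, hj, sq_nonneg]
  have hTne : T.Nonempty := Finset.card_pos.mp (by rw [hTcard]; exact hK)
  obtain ⟨i0, hi0, hmin⟩ := Finset.exists_min_image T (fun i => |h i|) hTne
  set t' := |h i0| with ht'
  have hb2 : ∀ j, |h2 j| ≤ t' := by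
    intro j
    by_cases hj : j ∈ T
    · simp only [hh2, if_pos hj, abs_zero]; exact abs_nonneg _
    · simp only [hh2, if_neg hj]; exact hTtop i0 hi0 j hj
  have hKt' : (K : ℝ) * t' ≤ l1 h1 := by
    rw [hh1, l1_rst]
    calc (K : ℝ) * t' = ∑ _i ∈ T, t' := by rw [Finset.sum_const, hTcard, nsmul_eq_mul]
      _ ≤ ∑ i ∈ T, |h i| := Finset.sum_le_sum fun i hi => hmin i hi
  have hsqt' : Real.sqrt K * t' ≤ l1 h1 / Real.sqrt K := by
    rw [le_div_iff₀ hsqK]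
    have hss : Real.sqrt K * Real.sqrt K = (K : ℝ) :=
      Real.mul_self_sqrt (by positivity)
    calc Real.sqrt K * t' * Real.sqrt K = Real.sqrt K * Real.sqrt K * t' := by ring
      _ = (K : ℝ) * t' := by rw [hss]
      _ ≤ l1 h1 := hKt'
  have hcard2 : (Finset.univ.filter (fun j => h2 j ≠ 0)).card ≤ n := by
    calc (Finset.univ.filter (fun j => h2 j ≠ 0)).card
        ≤ (Finset.univ : Finset (Fin n)).card := Finset.card_le_card (Finset.filter_subset _ _)
      _ = n := by simp
  have ih2 := main_ind A K hK hKn n h2 t' hcard2 hb2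
  calc l2 (A.mulVec h) ≤ l2 (A.mulVec h1) + l2 (A.mulVec h2) := btri
    _ ≤ subNorm A K * l2 h1
        + subNorm A K * (Real.sqrt K * t' + l1 h2 / Real.sqrt K) := add_le_add b1 ih2
    _ ≤ subNorm A K * l2 h
        + subNorm A K * (l1 h1 / Real.sqrt K + l1 h2 / Real.sqrt K) := by
        refine add_le_add (mul_le_mul_of_nonneg_left bl2h1 hC)
          (mul_le_mul_of_nonneg_left (add_le_add_left hsqt' _) hC)
    _ = subNorm A K * (l2 h + l1 h / Real.sqrt K) := by
        rw [← l1_split T h, ← hh1, ← hh2]; ring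

end MainInd

lemma bestApprox_l2_le {n K : ℕ} {s sK : Fin n → ℝ}
    (hbest : IsBestApprox K s sK) : l2 sK ≤ l2 s := by
  obtain ⟨⟨S, hScard, hSsupp⟩, hopt⟩ := hbest
  set t : Fin n → ℝ := fun j => if j ∈ S then s j else 0 with htdef
  have hopt1 := hopt t ⟨S, hScard, fun i hi => if_neg hi⟩
  have hsq : ∑ j, (s j - sK j) ^ 2 ≤ ∑ j, (s j - t j) ^ 2 := by
    have h2 := pow_le_pow_left₀ (l2_nonneg (s - sK)) hopt1 2
    rw [l2_sq, l2_sq] at h2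
    simpa using h2
  have hL : ∑ j, (s j - sK j) ^ 2
      = ∑ j ∈ S, (s j - sK j) ^ 2 + ∑ j ∈ Sᶜ, s j ^ 2 := by
    rw [← Finset.sum_add_sum_compl S]
    congr 1
    refine Finset.sum_congr rfl fun j hj => ?_
    rw [hSsupp j (Finset.mem_compl.mp hj), sub_zero]
  have hR : ∑ j, (s j - t j) ^ 2 = ∑ j ∈ Sᶜ, s j ^ 2 := by
    rw [← Finset.sum_add_sum_compl S]
    have e1 : ∑ j ∈ S, (s j - t j) ^ 2 = 0 := by
      refine Finset.sum_eq_zero fun j hj => by simp [htdef, hj]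
    have e2 : ∑ j ∈ Sᶜ, (s j - t j) ^ 2 = ∑ j ∈ Sᶜ, s j ^ 2 := by
      refine Finset.sum_congr rfl fun j hj => by
        simp [htdef, Finset.mem_compl.mp hj]
    rw [e1, e2, zero_add]
  have hzero : ∑ j ∈ S, (s j - sK j) ^ 2 ≤ 0 := by
    rw [hL, hR] at hsq; linarith
  have hEq : ∀ j ∈ S, sK j = s j := by
    intro j hj
    have hz := (Finset.sum_eq_zero_iff_of_nonneg (fun j _ => sq_nonneg (s j - sK j))).mp
      (le_antisymm hzero (Finset.sum_nonneg fun j _ => sq_nonneg _)) j hj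
    have := pow_eq_zero_iff (n := 2) (by norm_num) |>.mp hz
    linarith [sub_eq_zero.mp this]
  apply l2_mono
  intro j
  by_cases hj : j ∈ S
  · rw [hEq j hj]
  · rw [hSsupp j hj]
    simpa using sq_nonneg (s j)


/-- Bound on the measurement noise:
`‖e‖₂ ≤ ε_y·‖A‖₂^{(K)}·‖s‖₂·(1 + r_K + s_K')`. -/
theorem stmt12 {m n : ℕ} (A : Matrix (Fin m) (Fin n) ℝ) (K : ℕ) (hK : 0 < K) (hKn : K ≤ n)
    (δ : ℝ) (h : SatisfiesRIP A K δ) (s : Fin n → ℝ) (hs : s ≠ 0) (sK : Fin n → ℝ)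
    (hbest : IsBestApprox K s sK) (e : Fin m → ℝ) (εy : ℝ) (hεy : 0 ≤ εy)
    (he : l2 e = εy * l2 (A.mulVec s)) :
    l2 e ≤ εy * subNorm A K * l2 s *
      (1 + l2 (s - sK) / l2 s + l1 (s - sK) / (Real.sqrt K * l2 s)) := by
  have hC : 0 ≤ subNorm A K := subNorm_nonneg A K hKn
  have hls : 0 < l2 s := l2_pos hs
  have hsqK : 0 < Real.sqrt K := Real.sqrt_pos.mpr (by exact_mod_cast hK)
  have hKle : l2 sK ≤ l2 s := bestApprox_l2_le hbest
  have hAsk : l2 (A.mulVec sK) ≤ subNorm A K * l2 sK := sparse_bound A K hKn sK hbest.1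
  have hAh := main_bound A K hK hKn (s - sK)
  have htri : l2 (A.mulVec s) ≤ l2 (A.mulVec sK) + l2 (A.mulVec (s - sK)) := by
    calc l2 (A.mulVec s) = l2 (A.mulVec sK + A.mulVec (s - sK)) := by
          rw [← Matrix.mulVec_add]
          congr 1
          funext j
          simp
      _ ≤ l2 (A.mulVec sK) + l2 (A.mulVec (s - sK)) := l2_add_le _ _
  have hmain : l2 (A.mulVec s)
      ≤ subNorm A K * (l2 s + l2 (s - sK) + l1 (s - sK) / Real.sqrt K) := by
    calc l2 (A.mulVec s)
        ≤ subNorm A K * l2 sK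
          + subNorm A K * (l2 (s - sK) + l1 (s - sK) / Real.sqrt K) :=
          le_trans htri (add_le_add hAsk hAh)
      _ ≤ subNorm A K * l2 s
          + subNorm A K * (l2 (s - sK) + l1 (s - sK) / Real.sqrt K) :=
          add_le_add_left (mul_le_mul_of_nonneg_left hKle hC) _
      _ = subNorm A K * (l2 s + l2 (s - sK) + l1 (s - sK) / Real.sqrt K) := by ring
  rw [he]
  have hrhs : εy * subNorm A K * l2 s *
      (1 + l2 (s - sK) / l2 s + l1 (s - sK) / (Real.sqrt K * l2 s))
      = εy * (subNorm A K * (l2 s + l2 (s - sK) + l1 (s - sK) / Real.sqrt K)) := by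
    field_simp
  rw [hrhs]
  exact mul_le_mul_of_nonneg_left hmain hεy
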